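/- Let k ≥ 2 and q be a prime power with q ≡ 1 (mod k) if q even, q ≡ 1 (mod 2k) if q odd. For any positive integer n, the number of complete subgraphs of order n+1 in the generalized Paley graph G_k(q) equals (q/(n+1)) times the number of complete subgraphs of order n in H_k(q), where H_k(q) is the induced subgraph of G_k(q) on the set of k-th power residues. -/

import Mathlib

open Finset

theorem genPaley_clique_count_relation {F : Type*} [Field F] [Fintype F]
    (k : ℕ) (hk : 2 ≤ k)
    (heven : Even (Fintype.card F) → Fintype.card F % k = 1)
    (hodd : Odd (Fintype.card F) → Fintype.card F % (2 * k) = 1)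
    (G : SimpleGraph F)
    (hG : ∀ a b : F, G.Adj a b ↔ a ≠ b ∧ ∃ c : F, c ≠ 0 ∧ c ^ k = a - b)
    (n : ℕ) (hn : 0 < n) :
    ((G.cliqueSet (n + 1)).ncard : ℚ)
      = (Fintype.card F : ℚ) / (n + 1) *
          ((G.induce {a : F | ∃ c : F, c ≠ 0 ∧ c ^ k = a}).cliqueSet n).ncard := by
  classical
  set S : Set F := {a : F | ∃ c : F, c ≠ 0 ∧ c ^ k = a} with hSdef
  have hS0 : (0 : F) ∉ S := by
    rintro ⟨c, hc, hck⟩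
    exact hc (pow_eq_zero_iff (by omega) |>.mp hck)
  have hAdj0 : ∀ a : F, G.Adj a 0 ↔ a ∈ S := by
    intro a
    rw [hG]
    constructor
    · rintro ⟨-, c, hc, hck⟩; exact ⟨c, hc, by simpa using hck⟩
    · rintro ⟨c, hc, hck⟩
      exact ⟨fun h => hS0 (h ▸ ⟨c, hc, hck⟩), c, hc, by simpa using hck⟩
  have htrans : ∀ (v a b : F), G.Adj a b → G.Adj (a + v) (b + v) := by
    intro v a b hab
    rw [hG] at hab ⊢
    obtain ⟨hne, c, hc, hck⟩ := hab
    exact ⟨by simpa using hne, c, hc, by rw [hck]; ring⟩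
  -- finset versions
  have hset1 : (G.cliqueSet (n + 1)).ncard = (G.cliqueFinset (n + 1)).card := by
    rw [← SimpleGraph.coe_cliqueFinset, Set.ncard_coe_finset]
  haveI : Fintype ↥S := Fintype.ofFinite _
  have hset2 : ((G.induce S).cliqueSet n).ncard = ((G.induce S).cliqueFinset n).card := by
    rw [← SimpleGraph.coe_cliqueFinset, Set.ncard_coe_finset]
  set C : Finset (Finset F) := G.cliqueFinset (n + 1) with hC
  set D : Finset (Finset ↥S) := (G.induce S).cliqueFinset n with hD
  -- Step A: double counting
  have stepA : ∑ v : F, (C.filter (fun s => v ∈ s)).card = (n + 1) * C.card := by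
    simp only [card_filter]
    rw [Finset.sum_comm]
    have h : ∀ s ∈ C, (∑ v : F, if v ∈ s then 1 else 0) = n + 1 := by
      intro s hs
      have h1 : (∑ v : F, if v ∈ s then 1 else 0) = s.card := by
        simp [Finset.sum_ite_mem, Finset.univ_inter]
      rw [h1, (SimpleGraph.mem_cliqueFinset_iff.mp hs).card_eq]
    rw [Finset.sum_congr rfl h, Finset.sum_const, smul_eq_mul, mul_comm]
  -- Step B: translation invariance
  have stepB : ∀ v : F, (C.filter (fun s => v ∈ s)).card
      = (C.filter (fun s => (0 : F) ∈ s)).card := by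
    intro v
    apply Finset.card_nbij' (fun s => s.image (· + (-v))) (fun s => s.image (· + v))
    · intro s hs
      simp only [mem_coe, mem_filter] at hs ⊢
      obtain ⟨hs, hv⟩ := hs
      rw [SimpleGraph.mem_cliqueFinset_iff] at hs ⊢
      refine ⟨⟨?_, ?_⟩, ?_⟩
      · rintro a ha b hb hne
        simp only [coe_image, Set.mem_image, mem_coe] at ha hb
        obtain ⟨x, hx, rfl⟩ := ha
        obtain ⟨y, hy, rfl⟩ := hb
        exact htrans _ _ _ (hs.1 hx hy (fun h => hne (by rw [h])))
      · rw [Finset.card_image_of_injective _ (add_left_injective _), hs.card_eq]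
      · exact Finset.mem_image.mpr ⟨v, hv, by ring⟩
    · intro s hs
      simp only [mem_coe, mem_filter] at hs ⊢
      obtain ⟨hs, hv⟩ := hs
      rw [SimpleGraph.mem_cliqueFinset_iff] at hs ⊢
      refine ⟨⟨?_, ?_⟩, ?_⟩
      · rintro a ha b hb hne
        simp only [coe_image, Set.mem_image, mem_coe] at ha hb
        obtain ⟨x, hx, rfl⟩ := ha
        obtain ⟨y, hy, rfl⟩ := hb
        exact htrans _ _ _ (hs.1 hx hy (fun h => hne (by rw [h])))
      · rw [Finset.card_image_of_injective _ (add_left_injective _), hs.card_eq]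
      · exact Finset.mem_image.mpr ⟨0, hv, by ring⟩
    · intro s hs
      dsimp only
      rw [Finset.image_image]
      simp
    · intro s hs
      dsimp only
      rw [Finset.image_image]
      simp
  -- Step C: cliques containing 0 vs cliques of induced graph
  have stepC : (C.filter (fun s => (0 : F) ∈ s)).card = D.card := by
    apply Finset.card_nbij' (fun s => (s.erase 0).subtype (· ∈ S))
      (fun t => insert 0 (t.map (Function.Embedding.subtype _)))
    · intro s hs
      simp only [mem_coe, mem_filter] at hs
      obtain ⟨hs, h0⟩ := hs
      rw [SimpleGraph.mem_cliqueFinset_iff] at hs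
      have hmem : ∀ x ∈ s.erase 0, x ∈ S := by
        intro x hx
        obtain ⟨hx0, hxs⟩ := Finset.mem_erase.mp hx
        exact (hAdj0 x).mp (hs.1 hxs h0 hx0)
      rw [hD, mem_coe, SimpleGraph.mem_cliqueFinset_iff]
      constructor
      · rintro ⟨a, ha⟩ hha ⟨b, hb⟩ hhb hne
        simp only [mem_coe, Finset.mem_subtype] at hha hhb
        simp only [SimpleGraph.comap_adj, Function.Embedding.coe_subtype]
        exact hs.1 (Finset.mem_erase.mp hha).2 (Finset.mem_erase.mp hhb).2
          (fun h => hne (Subtype.ext h))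
      · have h1 : ((s.erase 0).subtype (· ∈ S)).card = (s.erase 0).card := by
          rw [← Finset.card_map (Function.Embedding.subtype _), Finset.subtype_map_of_mem hmem]
        rw [h1, Finset.card_erase_of_mem h0, hs.card_eq]
        omega
    · intro t ht
      rw [hD, mem_coe, SimpleGraph.mem_cliqueFinset_iff] at ht
      have h0not : (0 : F) ∉ t.map (Function.Embedding.subtype _) := by
        simp only [Finset.mem_map, Function.Embedding.coe_subtype]
        rintro ⟨⟨x, hx⟩, -, rfl⟩
        exact hS0 hx
      simp only [mem_coe, mem_filter]
      refine ⟨SimpleGraph.mem_cliqueFinset_iff.mpr ⟨?_, ?_⟩, Finset.mem_insert_self _ _⟩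
      · rintro a ha b hb hne
        simp only [coe_insert, Set.mem_insert_iff, mem_coe, Finset.mem_map,
          Function.Embedding.coe_subtype] at ha hb
        rcases ha with rfl | ⟨⟨x, hxS⟩, hx, rfl⟩
        · rcases hb with rfl | ⟨⟨y, hyS⟩, hy, rfl⟩
          · exact absurd rfl hne
          · exact ((hAdj0 y).mpr hyS).symm
        · rcases hb with rfl | ⟨⟨y, hyS⟩, hy, rfl⟩
          · exact (hAdj0 x).mpr hxS
          · have := ht.1 hx hy (fun h => hne (congrArg _ h))
            simpa using this
      · rw [Finset.card_insert_of_notMem h0not, Finset.card_map, ht.card_eq]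
    · intro s hs
      simp only [mem_coe, mem_filter] at hs
      dsimp only
      rw [Finset.subtype_map_of_mem, Finset.insert_erase hs.2]
      intro x hx
      obtain ⟨hx0, hxs⟩ := Finset.mem_erase.mp hx
      exact (hAdj0 x).mp ((SimpleGraph.mem_cliqueFinset_iff.mp hs.1).1 hxs hs.2 hx0)
    · intro t ht
      have h0not : (0 : F) ∉ t.map (Function.Embedding.subtype _) := by
        simp only [Finset.mem_map, Function.Embedding.coe_subtype]
        rintro ⟨⟨x, hx⟩, -, rfl⟩
        exact hS0 hx
      dsimp only
      rw [Finset.erase_insert h0not]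
      ext ⟨a, ha⟩
      simp only [Finset.mem_subtype, Finset.mem_map, Function.Embedding.coe_subtype]
      constructor
      · rintro ⟨⟨b, hb⟩, hbt, h⟩
        obtain rfl : b = a := h
        exact hbt
      · intro h; exact ⟨⟨a, ha⟩, h, rfl⟩
  -- combine
  have key : Fintype.card F * D.card = (n + 1) * C.card := by
    rw [← stepA]
    rw [Finset.sum_congr rfl (fun v _ => (stepB v).trans stepC)]
    simp [mul_comm]
  rw [hset1, hset2]
  have hq : ((n : ℚ) + 1) ≠ 0 := by positivity
  rw [div_mul_eq_mul_div, eq_div_iff hq]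
  have := congrArg (fun m : ℕ => (m : ℚ)) key
  push_cast at this ⊢
  linarith
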